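/- Let G = (V, E) be a finite simple graph with bunkbed graph G±, let u ≠ v ∈ V, let r ≥ 2, and let A₁, …, A_r be distinct cuts (each in S⁻ or each in S⁺) with S := supp(A₁, …, A_r) such that u and v lie in different components of G[S]. Let W be the component of G[S] containing v, and let A'ᵢ be obtained from Aᵢ by swapping x₋ ↔ x₊ for all x ∈ W. Then (A'₁, …, A'_r) are distinct cuts in the opposite family (S⁺ or S⁻ respectively), supp(A'₁,…,A'_r) = S, and ∂A'₁ ∪ ⋯ ∪ ∂A'_r has the same probability under any symmetric edge-probability function, i.e., P(E_{A'₁} ∩ ⋯ ∩ E_{A'_r}) = P(E_{A₁} ∩ ⋯ ∩ E_{A_r}). -/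

import Mathlib

open SimpleGraph Finset
open scoped Classical

variable {V : Type*}

/-- The bunkbed graph `G □ K₂`: vertex `(x, false)` is `x₋`, vertex `(x, true)` is `x₊`. -/
def bunkbed (G : SimpleGraph V) : SimpleGraph (V × Bool) where
  Adj a b := (a.2 = b.2 ∧ G.Adj a.1 b.1) ∨ (a.1 = b.1 ∧ a.2 ≠ b.2)
  symm := by
    constructor
    rintro ⟨x, s⟩ ⟨y, t⟩ (⟨h1, h2⟩ | ⟨h1, h2⟩)
    · exact Or.inl ⟨h1.symm, h2.symm⟩
    · exact Or.inr ⟨h1.symm, Ne.symm h2⟩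
  loopless := by
    constructor
    rintro ⟨x, s⟩ (⟨_, h⟩ | ⟨_, h⟩)
    · exact G.irrefl h
    · exact h rfl

/-- `supp A = {x : h_x(A) = 1}`, i.e. exactly one of `x₋, x₊` lies in `A`. -/
def supp (A : Set (V × Bool)) : Set V := {x | Xor' ((x, false) ∈ A) ((x, true) ∈ A)}

/-- Edge boundary of a vertex set in a graph. -/
def bdry {W : Type*} (H : SimpleGraph W) (A : Set W) : Set (Sym2 W) :=
  {e | e ∈ H.edgeSet ∧ ∃ x y, e = s(x, y) ∧ x ∈ A ∧ y ∉ A}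

/-- The induced restriction of `G` to a vertex set `S`, as a graph on `V`. -/
def within (G : SimpleGraph V) (S : Set V) : SimpleGraph V where
  Adj a b := G.Adj a b ∧ a ∈ S ∧ b ∈ S
  symm := ⟨fun _ _ ⟨h, ha, hb⟩ => ⟨h.symm, hb, ha⟩⟩
  loopless := ⟨fun a ⟨h, _⟩ => G.irrefl h⟩

/-- Probability of an event `Q` (a predicate on the set of open edges) under independent
bond percolation on `H` where edge `e` is open with probability `p e`. -/
noncomputable def prEvent {W : Type*} [Fintype W] (H : SimpleGraph W)
    (p : Sym2 W → ℝ) (Q : Finset (Sym2 W) → Prop) : ℝ :=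
  ∑ ω ∈ H.edgeFinset.powerset,
    if Q ω then ∏ e ∈ H.edgeFinset, (if e ∈ ω then p e else 1 - p e) else 0

/-- The two-point function: probability that `a` and `b` are joined by a path of open edges. -/
noncomputable def prConn {W : Type*} [Fintype W] (H : SimpleGraph W)
    (p : Sym2 W → ℝ) (a b : W) : ℝ :=
  prEvent H p fun ω => (SimpleGraph.fromEdgeSet (↑ω : Set (Sym2 W))).Reachable a b

lemma mem_bdry_iff {W : Type*} (H : SimpleGraph W) (A : Set W) (a b : W) :
    s(a, b) ∈ bdry H A ↔ H.Adj a b ∧ ¬((a ∈ A) ↔ (b ∈ A)) := by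
  constructor
  · rintro ⟨he, x, y, hxy, hx, hy⟩
    rw [SimpleGraph.mem_edgeSet] at he
    refine ⟨he, ?_⟩
    rw [Sym2.eq_iff] at hxy
    rcases hxy with ⟨rfl, rfl⟩ | ⟨rfl, rfl⟩ <;> tauto
  · rintro ⟨he, h⟩
    by_cases ha : a ∈ A
    · exact ⟨he, a, b, rfl, ha, fun hb => h ⟨fun _ => hb, fun _ => ha⟩⟩
    · refine ⟨he, b, a, Sym2.eq_swap.symm, ?_, ha⟩
      tauto

lemma bunkbed_adj_flip (G : SimpleGraph V) (a b : V × Bool) :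
    (bunkbed G).Adj (a.1, !a.2) (b.1, !b.2) ↔ (bunkbed G).Adj a b := by
  have hb : ∀ s t : Bool, (((!s) = (!t)) ↔ s = t) ∧ (((!s) ≠ (!t)) ↔ s ≠ t) := by decide
  show (((!a.2) = (!b.2) ∧ _) ∨ (_ ∧ (!a.2) ≠ (!b.2))) ↔ _
  rw [(hb a.2 b.2).1, (hb a.2 b.2).2]; rfl

/-- the level-swap map over the component of `v` in `G[S]`. -/
noncomputable def swapMap (G : SimpleGraph V) (S : Set V) (v : V) (p : V × Bool) : V × Bool :=
  if p.1 ∈ S ∧ (within G S).Reachable v p.1 then (p.1, !p.2) else p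

lemma swapMap_invol (G : SimpleGraph V) (S : Set V) (v : V) (p : V × Bool) :
    swapMap G S v (swapMap G S v p) = p := by
  unfold swapMap
  by_cases h : p.1 ∈ S ∧ (within G S).Reachable v p.1 <;> simp [h]

lemma notin_supp_iff {A : Set (V × Bool)} {x : V} (h : x ∉ supp A) :
    ((x, false) ∈ A ↔ (x, true) ∈ A) := by
  simp only [supp, Set.mem_setOf_eq, Xor', Xor] at h
  tauto

lemma supp_swap (G : SimpleGraph V) (S : Set V) (v : V) (B : Set (V × Bool)) :
    supp (swapMap G S v ⁻¹' B) = supp B := by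
  ext x
  simp only [supp, Set.mem_setOf_eq, Set.mem_preimage, swapMap]
  by_cases h : x ∈ S ∧ (within G S).Reachable v x
  · simp only [if_pos h, Bool.not_false, Bool.not_true, Xor', Xor]
    tauto
  · simp only [if_neg h]

/-- the level-swap on edges: flip both endpoints if either endpoint lies over `W`. -/
noncomputable def edgeSwap (G : SimpleGraph V) (S : Set V) (v : V) (e : Sym2 (V × Bool)) :
    Sym2 (V × Bool) :=
  if ∃ q ∈ e, q.1 ∈ S ∧ (within G S).Reachable v q.1 then
    Sym2.map (fun q => (q.1, !q.2)) e else e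

lemma edgeSwap_invol (G : SimpleGraph V) (S : Set V) (v : V) (e : Sym2 (V × Bool)) :
    edgeSwap G S v (edgeSwap G S v e) = e := by
  unfold edgeSwap
  by_cases h : ∃ q ∈ e, q.1 ∈ S ∧ (within G S).Reachable v q.1
  · have h2 : ∃ q ∈ Sym2.map (fun q => (q.1, !q.2)) e,
        q.1 ∈ S ∧ (within G S).Reachable v q.1 := by
      obtain ⟨q, hq, hc⟩ := h
      exact ⟨(q.1, !q.2), Sym2.mem_map.mpr ⟨q, hq, rfl⟩, hc⟩
    rw [if_pos h, if_pos h2, Sym2.map_map]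
    have : ((fun q : V × Bool => (q.1, !q.2)) ∘ (fun q : V × Bool => (q.1, !q.2))) = id := by
      funext q; simp
    rw [this, Sym2.map_id, id]
  · rw [if_neg h, if_neg h]

lemma mem_bdry_swap_aux (G : SimpleGraph V) (v : V) (S : Set V) (A : Set (V × Bool))
    (hAS : supp A ⊆ S) (a b : V × Bool)
    (ha : a.1 ∈ S ∧ (within G S).Reachable v a.1)
    (hb : ¬(b.1 ∈ S ∧ (within G S).Reachable v b.1)) :
    (s(a, b) ∈ bdry (bunkbed G) (swapMap G S v ⁻¹' A) ↔
      s((a.1, !a.2), (b.1, !b.2)) ∈ bdry (bunkbed G) A) := by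
  rw [mem_bdry_iff, mem_bdry_iff, bunkbed_adj_flip]
  have hma : a ∈ swapMap G S v ⁻¹' A ↔ (a.1, !a.2) ∈ A := by
    rw [Set.mem_preimage, swapMap, if_pos ha]
  have hmb : b ∈ swapMap G S v ⁻¹' A ↔ b ∈ A := by
    rw [Set.mem_preimage, swapMap, if_neg hb]
  have key : (bunkbed G).Adj a b → ((b ∈ A) ↔ ((b.1, !b.2) ∈ A)) := by
    intro hadj
    have hadj' : (a.2 = b.2 ∧ G.Adj a.1 b.1) ∨ (a.1 = b.1 ∧ a.2 ≠ b.2) := hadj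
    rcases hadj' with ⟨h2, hGadj⟩ | ⟨h1, hne⟩
    · have hbS : b.1 ∉ S := fun hbS =>
        hb ⟨hbS, ha.2.trans (SimpleGraph.Adj.reachable (show (within G S).Adj a.1 b.1 from (⟨hGadj, ha.1, hbS⟩ : G.Adj a.1 b.1 ∧ a.1 ∈ S ∧ b.1 ∈ S)))⟩
      have hiff := notin_supp_iff (A := A) (x := b.1) (fun hx => hbS (hAS hx))
      obtain ⟨y, t⟩ := b
      cases t <;> simp_all
    · exact absurd (h1 ▸ ha) hb
  rw [hma, hmb]
  constructor <;> rintro ⟨hadj, hne⟩ <;> refine ⟨hadj, ?_⟩ <;> have hk := key hadj <;> tauto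

lemma mem_bdry_swap (G : SimpleGraph V) (v : V) (S : Set V) (A : Set (V × Bool))
    (hAS : supp A ⊆ S) (e : Sym2 (V × Bool)) :
    e ∈ bdry (bunkbed G) (swapMap G S v ⁻¹' A) ↔ edgeSwap G S v e ∈ bdry (bunkbed G) A := by
  induction e using Sym2.inductionOn with
  | hf a b =>
  by_cases ha : a.1 ∈ S ∧ (within G S).Reachable v a.1 <;>
    by_cases hb : b.1 ∈ S ∧ (within G S).Reachable v b.1
  · rw [edgeSwap, if_pos ⟨a, Sym2.mem_mk_left a b, ha⟩, Sym2.map_pair_eq,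
      mem_bdry_iff, mem_bdry_iff, bunkbed_adj_flip]
    have hma : a ∈ swapMap G S v ⁻¹' A ↔ (a.1, !a.2) ∈ A := by
      rw [Set.mem_preimage, swapMap, if_pos ha]
    have hmb : b ∈ swapMap G S v ⁻¹' A ↔ (b.1, !b.2) ∈ A := by
      rw [Set.mem_preimage, swapMap, if_pos hb]
    rw [hma, hmb]
  · rw [edgeSwap, if_pos ⟨a, Sym2.mem_mk_left a b, ha⟩, Sym2.map_pair_eq]
    exact mem_bdry_swap_aux G v S A hAS a b ha hb
  · rw [edgeSwap, if_pos ⟨b, Sym2.mem_mk_right a b, hb⟩, Sym2.map_pair_eq]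
    rw [show s(a, b) = s(b, a) from Sym2.eq_swap,
      show s((a.1, !a.2), (b.1, !b.2)) = s((b.1, !b.2), (a.1, !a.2)) from Sym2.eq_swap]
    exact mem_bdry_swap_aux G v S A hAS b a hb ha
  · have hne : ¬∃ q ∈ s(a, b), q.1 ∈ S ∧ (within G S).Reachable v q.1 := by
      rintro ⟨q, hq, hc⟩
      rcases Sym2.mem_iff.mp hq with rfl | rfl
      · exact ha hc
      · exact hb hc
    rw [edgeSwap, if_neg hne, mem_bdry_iff, mem_bdry_iff]
    have hma : a ∈ swapMap G S v ⁻¹' A ↔ a ∈ A := by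
      rw [Set.mem_preimage, swapMap, if_neg ha]
    have hmb : b ∈ swapMap G S v ⁻¹' A ↔ b ∈ A := by
      rw [Set.mem_preimage, swapMap, if_neg hb]
    rw [hma, hmb]

lemma p_edgeSwap (G : SimpleGraph V) (S : Set V) (v : V) (p : Sym2 (V × Bool) → ℝ)
    (hsym : ∀ x y : V, p s((x, false), (y, false)) = p s((x, true), (y, true)))
    (e : Sym2 (V × Bool)) (he : e ∈ (bunkbed G).edgeSet) :
    p (edgeSwap G S v e) = p e := by
  induction e using Sym2.inductionOn with
  | hf a b =>
  rw [SimpleGraph.mem_edgeSet] at he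
  rw [edgeSwap]
  split
  · rw [Sym2.map_pair_eq]
    have he' : (a.2 = b.2 ∧ G.Adj a.1 b.1) ∨ (a.1 = b.1 ∧ a.2 ≠ b.2) := he
    obtain ⟨x, s⟩ := a; obtain ⟨y, t⟩ := b
    simp only at he' ⊢
    rcases he' with ⟨h2, hGadj⟩ | ⟨h1, hne⟩
    · subst h2
      cases s
      · simpa using (hsym x y).symm
      · simpa using hsym x y
    · subst h1
      cases s <;> cases t <;> simp only [Bool.not_false, Bool.not_true] at hne ⊢
      · exact absurd rfl hne
      · rw [Sym2.eq_swap]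
      · rw [Sym2.eq_swap]
      · exact absurd rfl hne
  · rfl

/-- For `r ≥ 2` distinct cuts all in `S⁻` (or all in `S⁺`) whose joint
support `S` has `u, v` in different components, swapping levels over the component `W` of
`v` yields distinct cuts in the opposite family with the same joint support, whose joint
boundary has the same closure probability under any symmetric edge-probability
function. -/
theorem swap_component_cancellation [Fintype V] (G : SimpleGraph V) (u v : V) (huv : u ≠ v)
    (r : ℕ) (hr : 2 ≤ r) (A : Fin r → Set (V × Bool)) (hdist : Function.Injective A)
    (hfam : (∀ i, (u, false) ∈ A i ∧ (v, false) ∉ A i) ∨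
      (∀ i, (u, false) ∈ A i ∧ (v, true) ∉ A i))
    (hdisc : ¬ (within G (⋃ i, supp (A i))).Reachable u v) :
    Function.Injective (fun i => {p : V × Bool |
        if p.1 ∈ ⋃ i, supp (A i) ∧ (within G (⋃ i, supp (A i))).Reachable v p.1 then
          (p.1, !p.2) ∈ A i else p ∈ A i}) ∧
    ((∀ i, (u, false) ∈ A i ∧ (v, false) ∉ A i) → ∀ i,
      (u, false) ∈ {p : V × Bool |
        if p.1 ∈ ⋃ i, supp (A i) ∧ (within G (⋃ i, supp (A i))).Reachable v p.1 then
          (p.1, !p.2) ∈ A i else p ∈ A i} ∧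
      (v, true) ∉ {p : V × Bool |
        if p.1 ∈ ⋃ i, supp (A i) ∧ (within G (⋃ i, supp (A i))).Reachable v p.1 then
          (p.1, !p.2) ∈ A i else p ∈ A i}) ∧
    ((∀ i, (u, false) ∈ A i ∧ (v, true) ∉ A i) → ∀ i,
      (u, false) ∈ {p : V × Bool |
        if p.1 ∈ ⋃ i, supp (A i) ∧ (within G (⋃ i, supp (A i))).Reachable v p.1 then
          (p.1, !p.2) ∈ A i else p ∈ A i} ∧
      (v, false) ∉ {p : V × Bool |
        if p.1 ∈ ⋃ i, supp (A i) ∧ (within G (⋃ i, supp (A i))).Reachable v p.1 then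
          (p.1, !p.2) ∈ A i else p ∈ A i}) ∧
    (⋃ i, supp {p : V × Bool |
        if p.1 ∈ ⋃ i, supp (A i) ∧ (within G (⋃ i, supp (A i))).Reachable v p.1 then
          (p.1, !p.2) ∈ A i else p ∈ A i}) = (⋃ i, supp (A i)) ∧
    ∀ p : Sym2 (V × Bool) → ℝ, (∀ e, 0 ≤ p e ∧ p e ≤ 1) →
      (∀ x y : V, p s((x, false), (y, false)) = p s((x, true), (y, true))) →
      ∏ e ∈ (⋃ i, bdry (bunkbed G) {pt : V × Bool |
          if pt.1 ∈ ⋃ i, supp (A i) ∧ (within G (⋃ i, supp (A i))).Reachable v pt.1 then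
            (pt.1, !pt.2) ∈ A i else pt ∈ A i}).toFinset, (1 - p e) =
        ∏ e ∈ (⋃ i, bdry (bunkbed G) (A i)).toFinset, (1 - p e) := by
  classical
  set S := ⋃ i, supp (A i) with hS
  have hAS : ∀ i, supp (A i) ⊆ S := fun i => Set.subset_iUnion (fun i => supp (A i)) i
  have hA' : ∀ B : Set (V × Bool), {p : V × Bool |
      if p.1 ∈ S ∧ (within G S).Reachable v p.1 then (p.1, !p.2) ∈ B else p ∈ B}
      = swapMap G S v ⁻¹' B := by
    intro B; ext p
    simp only [Set.mem_setOf_eq, Set.mem_preimage, swapMap]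
    split <;> rfl
  simp only [hA']
  have hu : ¬(u ∈ S ∧ (within G S).Reachable v u) := fun ⟨_, h⟩ => hdisc h.symm
  have hmemu : ∀ B : Set (V × Bool),
      ((u, false) ∈ swapMap G S v ⁻¹' B) ↔ (u, false) ∈ B := by
    intro B
    rw [Set.mem_preimage, swapMap, if_neg]
    exact hu
  have hmemv : ∀ B : Set (V × Bool), supp B ⊆ S → ∀ t : Bool,
      ((v, t) ∈ swapMap G S v ⁻¹' B) ↔ (v, !t) ∈ B := by
    intro B hBS t
    rw [Set.mem_preimage, swapMap]
    by_cases hvS : v ∈ S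
    · rw [if_pos ⟨hvS, SimpleGraph.Reachable.refl v⟩]
    · rw [if_neg (fun h => hvS h.1)]
      have := notin_supp_iff (A := B) (x := v) (fun hx => hvS (hBS hx))
      cases t <;> simp_all
  refine ⟨?_, ?_, ?_, ?_, ?_⟩
  · intro i j h
    apply hdist
    ext q
    have := Set.ext_iff.mp h (swapMap G S v q)
    simpa only [Set.mem_preimage, swapMap_invol] using this
  · intro h i
    refine ⟨(hmemu (A i)).mpr (h i).1, ?_⟩
    rw [hmemv (A i) (hAS i) true]
    simpa using (h i).2
  · intro h i
    refine ⟨(hmemu (A i)).mpr (h i).1, ?_⟩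
    rw [hmemv (A i) (hAS i) false]
    simpa using (h i).2
  · simp only [supp_swap]
    exact hS.symm
  · intro p hp hsym
    have hiff : ∀ e, (e ∈ ⋃ i, bdry (bunkbed G) (swapMap G S v ⁻¹' A i)) ↔
        edgeSwap G S v e ∈ ⋃ i, bdry (bunkbed G) (A i) := by
      intro e
      simp only [Set.mem_iUnion]
      exact exists_congr fun i => mem_bdry_swap G v S (A i) (hAS i) e
    have hedge : ∀ e, (e ∈ ⋃ i, bdry (bunkbed G) (swapMap G S v ⁻¹' A i)) →
        e ∈ (bunkbed G).edgeSet := by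
      intro e he
      obtain ⟨s, ⟨i, rfl⟩, hes⟩ := he
      exact hes.1
    refine Finset.prod_nbij' (edgeSwap G S v) (edgeSwap G S v) ?_ ?_ ?_ ?_ ?_
    · intro e he
      rw [Set.mem_toFinset] at he ⊢
      exact (hiff e).mp he
    · intro e he
      rw [Set.mem_toFinset] at he ⊢
      rw [hiff (edgeSwap G S v e), edgeSwap_invol]
      exact he
    · intro e _; exact edgeSwap_invol G S v e
    · intro e _; exact edgeSwap_invol G S v e
    · intro e he
      rw [Set.mem_toFinset] at he
      rw [p_edgeSwap G S v p hsym e (hedge e he)]
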